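/- arXiv:1104.3849 — 4 statements merged into one kernel-verified Lean document; each statement's English description precedes it below -/
import Mathlib

section
/- Let U be an open convex domain in ℝⁿ and f : U → ℝ a continuous function. Suppose there is a constant L such that for every q ∈ U there exists a function f_q : U → ℝ that is differentiable at q, satisfies f_q ≤ f on U and f_q(q) = f(q), and whose gradient at q has norm at most L. Then f is Lipschitz on U with Lipschitz constant L. -/
/-- Lower support functions with uniformly bounded gradients force global
Lipschitz continuity on an open convex domain. -/
theorem stmt0 (n : ℕ) (U : Set (EuclideanSpace ℝ (Fin n)))
    (hU : IsOpen U) (hUc : Convex ℝ U)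
    (f : EuclideanSpace ℝ (Fin n) → ℝ) (hf : ContinuousOn f U)
    (L : ℝ) (hL : 0 ≤ L)
    (hsupp : ∀ q ∈ U, ∃ fq : EuclideanSpace ℝ (Fin n) → ℝ,
      DifferentiableAt ℝ fq q ∧ (∀ x ∈ U, fq x ≤ f x) ∧ fq q = f q ∧
      ‖fderiv ℝ fq q‖ ≤ L) :
    ∀ x ∈ U, ∀ y ∈ U, |f x - f y| ≤ L * ‖x - y‖ := by
  have key : ∀ x ∈ U, ∀ y ∈ U, f x - f y ≤ L * ‖x - y‖ := by
    intro x hx y hy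
    set v : EuclideanSpace ℝ (Fin n) := y - x with hv
    set γ : ℝ → EuclideanSpace ℝ (Fin n) := fun t => x + t • v with hγ
    have hγc : Continuous γ := by continuity
    have hγmem : ∀ t ∈ Set.Icc (0:ℝ) 1, γ t ∈ U := by
      intro t ht
      have h := hUc hx hy (by linarith [ht.2] : (0:ℝ) ≤ 1 - t) ht.1 (by ring)
      have : γ t = (1 - t) • x + t • y := by
        simp only [hγ, hv]
        module
      rwa [this]
    have hγderiv : ∀ t : ℝ, HasDerivAt γ v t := by
      intro t
      simpa [hγ] using ((hasDerivAt_id t).smul_const v).const_add x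
    set F : ℝ → ℝ := fun t => -f (γ t) with hF
    set B : ℝ → ℝ := fun t => -f x + (L * ‖v‖) * t with hB
    have hFc : ContinuousOn F (Set.Icc 0 1) := by
      have : ContinuousOn (f ∘ γ) (Set.Icc 0 1) :=
        hf.comp hγc.continuousOn hγmem
      exact this.neg
    have hBc : ContinuousOn B (Set.Icc 0 1) := by fun_prop
    have hB' : ∀ t ∈ Set.Ico (0:ℝ) 1, HasDerivWithinAt B (L * ‖v‖) (Set.Ici t) t := by
      intro t _
      simpa [hB] using (((hasDerivWithinAt_id t (Set.Ici t)).const_mul (L * ‖v‖)).const_add (-f x))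
    have bound : ∀ t ∈ Set.Ico (0:ℝ) 1, ∀ r, L * ‖v‖ < r →
        ∃ᶠ z in nhdsWithin t (Set.Ioi t), slope F t z < r := by
      intro t ht r hr
      have hq : γ t ∈ U := hγmem t ⟨ht.1, ht.2.le⟩
      obtain ⟨fq, hfqd, hfqle, hfqeq, hfqn⟩ := hsupp (γ t) hq
      set g : ℝ → ℝ := fun s => fq (γ s) with hg
      set D : ℝ := fderiv ℝ fq (γ t) v with hD
      have hgderiv : HasDerivAt g D t :=
        hfqd.hasFDerivAt.comp_hasDerivAt t (hγderiv t)
      have hDle : -D < r := by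
        have h1 : |D| ≤ ‖fderiv ℝ fq (γ t)‖ * ‖v‖ := by
          simpa using (fderiv ℝ fq (γ t)).le_opNorm v
        have h2 : ‖fderiv ℝ fq (γ t)‖ * ‖v‖ ≤ L * ‖v‖ :=
          mul_le_mul_of_nonneg_right hfqn (norm_nonneg v)
        have := neg_abs_le D
        linarith
      have hslope : Filter.Tendsto (fun z => -slope g t z) (nhdsWithin t (Set.Ioi t)) (nhds (-D)) := by
        have := (hasDerivAt_iff_tendsto_slope.mp hgderiv).neg
        exact this.mono_left (nhdsWithin_mono t fun z hz => ne_of_gt hz)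
      have h1 : ∀ᶠ z in nhdsWithin t (Set.Ioi t), -slope g t z < r :=
        hslope.eventually_lt_const hDle
      have h2 : ∀ᶠ z in nhdsWithin t (Set.Ioi t), γ z ∈ U := by
        have : ∀ᶠ z in nhds t, γ z ∈ U :=
          (hγc.continuousAt (x := t)).eventually_mem (hU.mem_nhds hq)
        exact this.filter_mono nhdsWithin_le_nhds
      have h3 : ∀ᶠ z in nhdsWithin t (Set.Ioi t), slope F t z < r := by
        filter_upwards [h1, h2, self_mem_nhdsWithin] with z hz1 hz2 hz3
        have hzt : (0:ℝ) < z - t := sub_pos.mpr hz3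
        have hnum : F z - F t ≤ -(g z - g t) := by
          have e1 : fq (γ z) ≤ f (γ z) := hfqle _ hz2
          simp only [hF, hg, hfqeq]
          linarith
        have : slope F t z ≤ -slope g t z := by
          rw [slope_def_field, slope_def_field]
          rw [div_le_iff₀ hzt] at *
          calc F z - F t ≤ -(g z - g t) := hnum
            _ = -((g z - g t) / (z - t)) * (z - t) := by field_simp
        linarith
      exact h3.frequently
    have hineq : F 1 ≤ B 1 :=
      image_le_of_liminf_slope_right_le_deriv_boundary hFc
        (by simp [hF, hB, hγ]) hBc hB' bound (Set.right_mem_Icc.mpr zero_le_one)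
    have hγ1 : γ 1 = y := by simp [hγ, hv]
    have hnorm : ‖v‖ = ‖x - y‖ := by rw [hv, norm_sub_rev]
    simp only [hF, hB, hγ1, mul_one] at hineq
    rw [← hnorm]
    linarith
  intro x hx y hy
  rw [abs_sub_le_iff]
  refine ⟨key x hx y hy, ?_⟩
  rw [norm_sub_rev]
  exact key y hy x hx
end

section
/- Let 𝔗 ⊆ ℝᵇ be a closed convex cone containing no nonzero linear subspace (𝔗 ∩ (−𝔗) = {0}), and let v, w ∈ 𝔗 with v ≠ 0 and w ≠ 0, and suppose ‖vₙ‖, ‖wₙ‖ → ∞ along sequences vₙ, wₙ ∈ 𝔗 with vₙ/‖vₙ‖ → v/‖v‖ and wₙ/‖wₙ‖ → w/‖w‖. Then min{ ‖vₙ + λ wₙ‖ : λ ∈ [0,1] } → ∞ as n → ∞. -/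
open Filter

lemma cone_sum_lower_bound (n : ℕ) (T : Set (EuclideanSpace ℝ (Fin n)))
    (hclosed : IsClosed T)
    (hcone : ∀ c : ℝ, 0 ≤ c → ∀ h ∈ T, c • h ∈ T)
    (hline : T ∩ (-T) = {0}) :
    ∃ c : ℝ, 0 < c ∧ ∀ a ∈ T, ∀ b ∈ T, c * ‖a‖ ≤ ‖a + b‖ := by
  have h0T : (0 : EuclideanSpace ℝ (Fin n)) ∈ T := by
    have : (0 : EuclideanSpace ℝ (Fin n)) ∈ T ∩ (-T) := by rw [hline]; rfl
    exact this.1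
  set K : Set (EuclideanSpace ℝ (Fin n) × EuclideanSpace ℝ (Fin n)) :=
    {p | p.1 ∈ T ∧ p.2 ∈ T ∧ ‖p.1‖ = 1 ∧ ‖p.2‖ ≤ 2} with hK
  by_cases hKne : K.Nonempty
  · have hKclosed : IsClosed K := by
      have h1 : IsClosed {p : EuclideanSpace ℝ (Fin n) × EuclideanSpace ℝ (Fin n) | p.1 ∈ T} :=
        hclosed.preimage continuous_fst
      have h2 : IsClosed {p : EuclideanSpace ℝ (Fin n) × EuclideanSpace ℝ (Fin n) | p.2 ∈ T} :=
        hclosed.preimage continuous_snd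
      have h3 : IsClosed {p : EuclideanSpace ℝ (Fin n) × EuclideanSpace ℝ (Fin n) | ‖p.1‖ = 1} :=
        isClosed_eq continuous_fst.norm continuous_const
      have h4 : IsClosed {p : EuclideanSpace ℝ (Fin n) × EuclideanSpace ℝ (Fin n) | ‖p.2‖ ≤ 2} :=
        isClosed_le continuous_snd.norm continuous_const
      have hKeq : K = ({p : EuclideanSpace ℝ (Fin n) × EuclideanSpace ℝ (Fin n) | p.1 ∈ T}
          ∩ {p | p.2 ∈ T}) ∩ ({p | ‖p.1‖ = 1} ∩ {p | ‖p.2‖ ≤ 2}) := by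
        ext p; simp only [hK, Set.mem_setOf_eq, Set.mem_inter_iff]; tauto
      rw [hKeq]; exact (h1.inter h2).inter (h3.inter h4)
    have hKbdd : Bornology.IsBounded K := by
      apply (Metric.isBounded_closedBall
        (x := (0 : EuclideanSpace ℝ (Fin n) × EuclideanSpace ℝ (Fin n))) (r := 2)).subset
      intro p hp
      simp only [Metric.mem_closedBall, dist_zero_right, Prod.norm_def]
      exact max_le (hp.2.2.1.le.trans one_le_two) hp.2.2.2
    have hKcompact : IsCompact K := Metric.isCompact_of_isClosed_isBounded hKclosed hKbdd
    obtain ⟨p₀, hp₀K, hp₀min⟩ := hKcompact.exists_isMinOn hKne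
      (Continuous.continuousOn (by continuity :
        Continuous fun p : EuclideanSpace ℝ (Fin n) × EuclideanSpace ℝ (Fin n) => ‖p.1 + p.2‖))
    set c₀ : ℝ := ‖p₀.1 + p₀.2‖ with hc₀
    have hc₀pos : 0 < c₀ := by
      rcases lt_or_eq_of_le (norm_nonneg (p₀.1 + p₀.2)) with h | h
      · exact h
      · exfalso
        have hsum : p₀.1 + p₀.2 = 0 := by
          have := h.symm; rwa [norm_eq_zero] at this
        have hneg : p₀.1 ∈ -T := by
          refine Set.mem_neg.mpr ?_
          have he : -p₀.1 = p₀.2 := neg_eq_of_add_eq_zero_right hsum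
          rw [he]; exact hp₀K.2.1
        have hmem0 : p₀.1 ∈ T ∩ (-T) := ⟨hp₀K.1, hneg⟩
        rw [hline] at hmem0
        have h1 : ‖p₀.1‖ = 1 := hp₀K.2.2.1
        simp only [Set.mem_singleton_iff] at hmem0
        rw [hmem0, norm_zero] at h1; norm_num at h1
    refine ⟨min c₀ 1, lt_min hc₀pos one_pos, ?_⟩
    intro a ha b hb
    rcases eq_or_ne a 0 with rfl | ha0
    · simp
    have hna : 0 < ‖a‖ := norm_pos_iff.mpr ha0
    by_cases hb2 : ‖b‖ ≤ 2 * ‖a‖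
    · have hmem : ((‖a‖⁻¹ • a, ‖a‖⁻¹ • b) :
          EuclideanSpace ℝ (Fin n) × EuclideanSpace ℝ (Fin n)) ∈ K := by
        refine ⟨hcone _ (inv_nonneg.mpr hna.le) a ha,
          hcone _ (inv_nonneg.mpr hna.le) b hb, ?_, ?_⟩
        · simp [norm_smul, abs_of_pos (inv_pos.mpr hna), inv_mul_cancel₀ hna.ne']
        · simp only [norm_smul, Real.norm_eq_abs, abs_of_pos (inv_pos.mpr hna)]
          rw [inv_mul_le_iff₀ hna]
          linarith
      have hle := hp₀min hmem
      simp only [Set.mem_setOf_eq] at hle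
      have heq : ‖‖a‖⁻¹ • a + ‖a‖⁻¹ • b‖ = ‖a‖⁻¹ * ‖a + b‖ := by
        rw [← smul_add, norm_smul, Real.norm_eq_abs, abs_of_pos (inv_pos.mpr hna)]
      rw [heq] at hle
      have hinv : ‖a‖⁻¹ * ‖a‖ = 1 := inv_mul_cancel₀ hna.ne'
      have hmain : c₀ * ‖a‖ ≤ ‖a + b‖ := by nlinarith [norm_nonneg (a + b)]
      calc min c₀ 1 * ‖a‖ ≤ c₀ * ‖a‖ :=
            mul_le_mul_of_nonneg_right (min_le_left _ _) hna.le
      _ ≤ ‖a + b‖ := hmain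
    · push_neg at hb2
      have h1 : ‖b‖ - ‖a‖ ≤ ‖a + b‖ := by
        calc ‖b‖ - ‖a‖ ≤ ‖b‖ - ‖-a‖ := by rw [norm_neg]
        _ ≤ ‖b - -a‖ := norm_sub_norm_le _ _
        _ = ‖a + b‖ := by rw [sub_neg_eq_add, add_comm]
      calc min c₀ 1 * ‖a‖ ≤ 1 * ‖a‖ :=
            mul_le_mul_of_nonneg_right (min_le_right _ _) hna.le
      _ = ‖a‖ := one_mul _
      _ ≤ ‖b‖ - ‖a‖ := by linarith
      _ ≤ ‖a + b‖ := h1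
  · refine ⟨1, one_pos, ?_⟩
    intro a ha b hb
    rcases eq_or_ne a 0 with rfl | ha0
    · simp
    exfalso
    apply hKne
    have hna : 0 < ‖a‖ := norm_pos_iff.mpr ha0
    exact ⟨(‖a‖⁻¹ • a, 0), hcone _ (inv_nonneg.mpr hna.le) a ha, h0T,
      by simp [norm_smul, abs_of_pos (inv_pos.mpr hna), inv_mul_cancel₀ hna.ne'],
      by norm_num⟩

/-- If `vₙ, wₙ` lie in a closed convex cone containing no line, with norms
tending to infinity and directions converging to directions of nonzero cone
elements, then `min_{λ∈[0,1]} ‖vₙ + λwₙ‖ → ∞`. -/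
theorem stmt5 (n : ℕ) (T : Set (EuclideanSpace ℝ (Fin n)))
    (hclosed : IsClosed T) (hconv : Convex ℝ T)
    (hcone : ∀ c : ℝ, 0 ≤ c → ∀ h ∈ T, c • h ∈ T)
    (hline : T ∩ (-T) = {0})
    (v w : EuclideanSpace ℝ (Fin n)) (hv : v ∈ T) (hw : w ∈ T)
    (hv0 : v ≠ 0) (hw0 : w ≠ 0)
    (vn wn : ℕ → EuclideanSpace ℝ (Fin n))
    (hvn : ∀ k, vn k ∈ T) (hwn : ∀ k, wn k ∈ T)
    (hvnorm : Filter.Tendsto (fun k => ‖vn k‖) Filter.atTop Filter.atTop)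
    (hwnorm : Filter.Tendsto (fun k => ‖wn k‖) Filter.atTop Filter.atTop)
    (hvdir : Filter.Tendsto (fun k => ‖vn k‖⁻¹ • vn k) Filter.atTop (nhds (‖v‖⁻¹ • v)))
    (hwdir : Filter.Tendsto (fun k => ‖wn k‖⁻¹ • wn k) Filter.atTop (nhds (‖w‖⁻¹ • w))) :
    Filter.Tendsto
      (fun k => sInf {r : ℝ | ∃ l ∈ Set.Icc (0:ℝ) 1, r = ‖vn k + l • wn k‖})
      Filter.atTop Filter.atTop := by
  obtain ⟨c, hc, hkey⟩ := cone_sum_lower_bound n T hclosed hcone hline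
  have hbound : ∀ k, c * ‖vn k‖ ≤
      sInf {r : ℝ | ∃ l ∈ Set.Icc (0:ℝ) 1, r = ‖vn k + l • wn k‖} := by
    intro k
    apply le_csInf
    · exact ⟨‖vn k + (0:ℝ) • wn k‖, 0, ⟨le_refl 0, zero_le_one⟩, rfl⟩
    · rintro r ⟨l, ⟨hl0, _⟩, rfl⟩
      exact hkey (vn k) (hvn k) (l • wn k) (hcone l hl0 (wn k) (hwn k))
  have hmul : Filter.Tendsto (fun k => c * ‖vn k‖) Filter.atTop Filter.atTop :=
    hvnorm.const_mul_atTop hc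
  exact tendsto_atTop_mono hbound hmul
end

section
/- Let 𝔗 ⊆ ℝᵇ be a closed convex cone and 𝔩 : 𝔗 → ℝ concave and positively 1-homogeneous. Suppose there exist constants ε₅ > 0 and h₀ ∈ 𝔗 \ {0} and a sequence hₙ ∈ 𝔗 with hₙ → λh₀ for some λ > 0, such that 𝔩(hₙ) ≥ ε₅ √(dist(hₙ, ℝ₊ h₀)) and dist(hₙ, ℝ₊h₀) > 0 for all n. Then no linear functional α with α ≥ 𝔩 on 𝔗 can satisfy α(h₀) = 0. -/
/-- The growth `𝔩(hₙ) ≥ ε₅√(dist(hₙ, ℝ₊h₀))` along a sequence converging to a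
positive multiple of `h₀` rules out any linear support function of `𝔩`
vanishing at `h₀`. -/
theorem stmt7 (n : ℕ) (T : Set (EuclideanSpace ℝ (Fin n)))
    (hclosed : IsClosed T) (hconv : Convex ℝ T)
    (hcone : ∀ c : ℝ, 0 ≤ c → ∀ h ∈ T, c • h ∈ T)
    (l : EuclideanSpace ℝ (Fin n) → ℝ)
    (hconc : ConcaveOn ℝ T l)
    (hhom : ∀ c : ℝ, 0 ≤ c → ∀ h ∈ T, l (c • h) = c * l h)
    (ε₅ : ℝ) (hε₅ : 0 < ε₅)
    (h₀ : EuclideanSpace ℝ (Fin n)) (hh₀ : h₀ ∈ T) (hh₀0 : h₀ ≠ 0)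
    (hn : ℕ → EuclideanSpace ℝ (Fin n)) (hhn : ∀ k, hn k ∈ T)
    (lam : ℝ) (hlam : 0 < lam)
    (hconv' : Filter.Tendsto hn Filter.atTop (nhds (lam • h₀)))
    (hgrow : ∀ k, ε₅ * Real.sqrt
        (Metric.infDist (hn k) {x | ∃ c : ℝ, 0 ≤ c ∧ x = c • h₀}) ≤ l (hn k))
    (hpos : ∀ k, 0 < Metric.infDist (hn k) {x | ∃ c : ℝ, 0 ≤ c ∧ x = c • h₀}) :
    ∀ α : EuclideanSpace ℝ (Fin n) →L[ℝ] ℝ, (∀ h ∈ T, l h ≤ α h) → α h₀ ≠ 0 := by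
  intro α hle hα0
  set S : Set (EuclideanSpace ℝ (Fin n)) := {x | ∃ c : ℝ, 0 ≤ c ∧ x = c • h₀} with hS
  have hSne : S.Nonempty := ⟨0, 0, le_refl 0, by simp⟩
  set d : ℕ → ℝ := fun k => Metric.infDist (hn k) S with hd
  -- α vanishes on S
  have hαS : ∀ x ∈ S, α x = 0 := by
    rintro x ⟨c, hc, rfl⟩
    simp [hα0]
  -- α (hn k) ≤ ‖α‖ * d k
  have key : ∀ k, α (hn k) ≤ ‖α‖ * d k := by
    intro k
    have hb : ∀ x ∈ S, α (hn k) ≤ ‖α‖ * dist (hn k) x := by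
      intro x hx
      have : α (hn k) - α x ≤ ‖α‖ * dist (hn k) x := by
        calc α (hn k) - α x = α (hn k - x) := by simp
          _ ≤ |α (hn k - x)| := le_abs_self _
          _ ≤ ‖α‖ * ‖hn k - x‖ := α.le_opNorm _
          _ = ‖α‖ * dist (hn k) x := by rw [dist_eq_norm]
      simpa [hαS x hx] using this
    rcases eq_or_lt_of_le (norm_nonneg α) with hα | hα
    · have := hb 0 ⟨0, le_refl 0, by simp⟩
      simpa [← hα] using this
    · rw [← div_le_iff₀' hα]; show _ ≤ Metric.infDist (hn k) S; rw [Metric.infDist_eq_iInf]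
      have : Nonempty S := hSne.to_subtype
      exact le_ciInf fun y => by
        rw [div_le_iff₀' hα]; exact hb y y.2
  -- ε₅ ≤ ‖α‖ * √(d k)
  have hkey2 : ∀ k, ε₅ ≤ ‖α‖ * Real.sqrt (d k) := by
    intro k
    have hdk := hpos k
    have hs : 0 < Real.sqrt (d k) := Real.sqrt_pos.mpr hdk
    have h1 : ε₅ * Real.sqrt (d k) ≤ ‖α‖ * d k :=
      (hgrow k).trans ((hle _ (hhn k)).trans (key k))
    have h2 : ‖α‖ * d k = ‖α‖ * Real.sqrt (d k) * Real.sqrt (d k) := by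
      rw [mul_assoc, Real.mul_self_sqrt hdk.le]
    rw [h2] at h1
    exact le_of_mul_le_mul_right h1 hs
  -- d k → 0
  have hd0 : Filter.Tendsto d Filter.atTop (nhds 0) := by
    have hcont : Filter.Tendsto (fun x => Metric.infDist x S) (nhds (lam • h₀)) (nhds (Metric.infDist (lam • h₀) S)) :=
      (Metric.continuous_infDist_pt S).continuousAt
    have hmem : (lam • h₀ : EuclideanSpace ℝ (Fin n)) ∈ S := ⟨lam, hlam.le, rfl⟩
    have : Metric.infDist (lam • h₀) S = 0 := Metric.infDist_zero_of_mem hmem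
    simpa [hd, this, Function.comp_def] using hcont.comp hconv'
  have hsq : Filter.Tendsto (fun k => ‖α‖ * Real.sqrt (d k)) Filter.atTop (nhds 0) := by
    have : Filter.Tendsto (fun k => Real.sqrt (d k)) Filter.atTop (nhds 0) := by
      simpa [Function.comp_def] using (Real.continuous_sqrt.continuousAt (x := 0)).tendsto.comp hd0
    simpa using this.const_mul ‖α‖
  have : ε₅ ≤ 0 := ge_of_tendsto hsq (Filter.Eventually.of_forall hkey2)
  linarith
end

section
/- Let D ⊆ ℝᵇ be a compact convex set, f : D → ℝ continuous concave with f ≥ 0, and suppose every affine function β on D with β ≥ f that touches f at some point of D satisfies β > 0 on D. Let K := {(h,t) : h ∈ D, 0 ≤ t ≤ f(h)}. Then every extreme point (h', t') of K with t' = f(h') that appears with positive coefficient in a convex-combination representation of a point (h, f(h)) with h ∈ relint(D) satisfies f(h') > 0. -/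
open scoped BigOperators

set_option maxHeartbeats 1000000 in
/-- Existence of an affine support function at an intrinsic interior point of
the domain of a concave function. -/
lemma exists_affine_support {n : ℕ} {D : Set (EuclideanSpace ℝ (Fin n))}
    (hDc : Convex ℝ D) {f : EuclideanSpace ℝ (Fin n) → ℝ}
    (hcont : ContinuousOn f D) (hconc : ConcaveOn ℝ D f)
    {h : EuclideanSpace ℝ (Fin n)} (hrel : h ∈ intrinsicInterior ℝ D) :
    ∃ β : EuclideanSpace ℝ (Fin n) →ᵃ[ℝ] ℝ,
      (∀ x ∈ D, f x ≤ β x) ∧ β h = f h := by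
  classical
  have hhD : h ∈ D := intrinsicInterior_subset hrel
  rw [intrinsicInterior] at hrel
  obtain ⟨h', hh', hcoe⟩ := hrel
  obtain ⟨ε, hε, hball⟩ := Metric.mem_nhds_iff.mp (mem_interior_iff_mem_nhds.mp hh')
  have hh'A : (h' : EuclideanSpace ℝ (Fin n)) ∈ affineSpan ℝ D := h'.2
  -- points of the direction ball land in D
  have hr : ∀ v : (affineSpan ℝ D).direction, ‖(v : EuclideanSpace ℝ (Fin n))‖ < ε →
      h + (v : EuclideanSpace ℝ (Fin n)) ∈ D := by
    intro v hv
    have hmemA : h + (v : EuclideanSpace ℝ (Fin n)) ∈ affineSpan ℝ D := by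
      have := AffineSubspace.vadd_mem_of_mem_direction v.2 (hcoe ▸ hh'A)
      simpa [add_comm] using this
    have hb : (⟨h + (v : EuclideanSpace ℝ (Fin n)), hmemA⟩ : affineSpan ℝ D)
        ∈ Metric.ball h' ε := by
      simp only [Metric.mem_ball, Subtype.dist_eq, dist_eq_norm]
      simpa [hcoe] using hv
    exact hball hb
  set V := (affineSpan ℝ D).direction with hVdef
  -- the open convex set in V × ℝ
  set O : Set (V × ℝ) :=
    {q | ‖(q.1 : EuclideanSpace ℝ (Fin n))‖ < ε ∧ q.2 < f (h + (q.1 : EuclideanSpace ℝ (Fin n)))}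
    with hOdef
  have hOopen : IsOpen O := by
    have hS : IsOpen {q : V × ℝ | ‖(q.1 : EuclideanSpace ℝ (Fin n))‖ < ε} :=
      isOpen_lt (by fun_prop) continuous_const
    have hφc : Continuous fun q : V × ℝ => h + (q.1 : EuclideanSpace ℝ (Fin n)) := by fun_prop
    have hgc : ContinuousOn (fun q : V × ℝ =>
        f (h + (q.1 : EuclideanSpace ℝ (Fin n))) - q.2)
        {q : V × ℝ | ‖(q.1 : EuclideanSpace ℝ (Fin n))‖ < ε} := by
      apply ContinuousOn.sub _ continuous_snd.continuousOn
      exact hcont.comp hφc.continuousOn (fun q hq => hr q.1 hq)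
    have := hgc.isOpen_inter_preimage hS (isOpen_Ioi (a := (0:ℝ)))
    convert this using 1
    ext q
    simp only [hOdef, Set.mem_setOf_eq, Set.mem_inter_iff, Set.mem_preimage, Set.mem_Ioi]
    constructor
    · rintro ⟨h1, h2⟩; exact ⟨h1, by linarith⟩
    · rintro ⟨h1, h2⟩; exact ⟨h1, by linarith⟩
  have hOconv : Convex ℝ O := by
    rintro q1 ⟨hq11, hq12⟩ q2 ⟨hq21, hq22⟩ a b ha hb hab
    rcases eq_or_lt_of_le ha with rfl | ha'
    · have hb1 : b = 1 := by linarith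
      subst hb1; simpa [hOdef] using ⟨hq21, hq22⟩
    rcases eq_or_lt_of_le hb with rfl | hb'
    · have ha1 : a = 1 := by linarith
      subst ha1; simpa [hOdef] using ⟨hq11, hq12⟩
    have hcoadd : ((a • q1 + b • q2 : V × ℝ).1 : EuclideanSpace ℝ (Fin n))
        = a • (q1.1 : EuclideanSpace ℝ (Fin n)) + b • (q2.1 : EuclideanSpace ℝ (Fin n)) := by
      simp
    constructor
    · rw [hcoadd]
      calc ‖a • (q1.1 : EuclideanSpace ℝ (Fin n)) + b • (q2.1 : EuclideanSpace ℝ (Fin n))‖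
          ≤ ‖a • (q1.1 : EuclideanSpace ℝ (Fin n))‖ + ‖b • (q2.1 : EuclideanSpace ℝ (Fin n))‖ :=
            norm_add_le _ _
        _ = a * ‖(q1.1 : EuclideanSpace ℝ (Fin n))‖ + b * ‖(q2.1 : EuclideanSpace ℝ (Fin n))‖ := by
            rw [norm_smul, norm_smul, Real.norm_eq_abs, Real.norm_eq_abs,
              abs_of_pos ha', abs_of_pos hb']
        _ < a * ε + b * ε := by
            exact add_lt_add (by nlinarith) (by nlinarith)
        _ = ε := by nlinarith
    · have hcc := hconc.2 (hr q1.1 hq11) (hr q2.1 hq21) ha hb hab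
      have heq : a • (h + (q1.1 : EuclideanSpace ℝ (Fin n)))
          + b • (h + (q2.1 : EuclideanSpace ℝ (Fin n)))
          = h + ((a • q1 + b • q2 : V × ℝ).1 : EuclideanSpace ℝ (Fin n)) := by
        rw [hcoadd]
        have hb1 : b = 1 - a := by linarith
        subst hb1
        module
      rw [heq] at hcc
      have hsnd : (a • q1 + b • q2 : V × ℝ).2 = a * q1.2 + b * q2.2 := by simp
      rw [hsnd]
      have : a * q1.2 + b * q2.2 < a * f (h + (q1.1 : EuclideanSpace ℝ (Fin n)))
          + b * f (h + (q2.1 : EuclideanSpace ℝ (Fin n))) := by nlinarith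
      calc a * q1.2 + b * q2.2
          < a * f (h + (q1.1 : EuclideanSpace ℝ (Fin n)))
            + b * f (h + (q2.1 : EuclideanSpace ℝ (Fin n))) := this
        _ = a • f (h + (q1.1 : EuclideanSpace ℝ (Fin n)))
            + b • f (h + (q2.1 : EuclideanSpace ℝ (Fin n))) := by simp [smul_eq_mul]
        _ ≤ _ := hcc
  -- the graph point is not in O
  have hq0 : ((0 : V), f h) ∉ O := by
    simp [hOdef]
  obtain ⟨φ, hφ⟩ := geometric_hahn_banach_open_point hOconv hOopen hq0
  obtain ⟨c, hcdef⟩ : ∃ c : ℝ, φ ((0 : V), (1 : ℝ)) = c := ⟨_, rfl⟩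
  have hkey : ∀ (v : V) (t : ℝ), φ (v, t) = φ (v, 0) + t * c := by
    intro v t
    have hvt : (v, t) = (v, (0:ℝ)) + t • ((0 : V), (1 : ℝ)) := by
      simp [Prod.ext_iff]
    rw [hvt, map_add, map_smul, smul_eq_mul, hcdef]
  have h00 : φ ((0 : V), (0:ℝ)) = 0 := by
    have h0 : ((0 : V), (0:ℝ)) = (0 : V × ℝ) := rfl
    rw [h0, map_zero]
  have hφ0 : φ ((0 : V), f h) = f h * c := by
    rw [hkey, h00, zero_add]
  have hc : 0 < c := by
    have hmem : ((0 : V), f h - 1) ∈ O := by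
      refine ⟨by simpa using hε, ?_⟩
      show f h - 1 < f (h + ((0 : V) : EuclideanSpace ℝ (Fin n)))
      simp
    have hlt := hφ _ hmem
    rw [hkey, hφ0, h00, zero_add] at hlt
    nlinarith
  have hc' : c ≠ 0 := ne_of_gt hc
  -- the support inequality near h
  have hsuppineq : ∀ v : V, ‖(v : EuclideanSpace ℝ (Fin n))‖ < ε →
      φ (v, 0) + f (h + (v : EuclideanSpace ℝ (Fin n))) * c ≤ f h * c := by
    intro v hv
    by_contra hlt
    push_neg at hlt
    obtain ⟨g, hg⟩ : ∃ g : ℝ, φ (v, 0) = g := ⟨_, rfl⟩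
    obtain ⟨s, hs⟩ : ∃ s : ℝ, f (h + (v : EuclideanSpace ℝ (Fin n))) = s := ⟨_, rfl⟩
    rw [hg, hs] at hlt
    have hδpos : 0 < (g + s * c - f h * c) / (2 * c) := div_pos (by linarith) (by linarith)
    have hmem : (v, s - (g + s * c - f h * c) / (2 * c)) ∈ O := by
      refine ⟨hv, ?_⟩
      show s - (g + s * c - f h * c) / (2 * c) < f (h + (v : EuclideanSpace ℝ (Fin n)))
      rw [hs]; linarith
    have hlt2 := hφ _ hmem
    rw [hkey, hφ0, hg] at hlt2
    have h2 : ((g + s * c - f h * c) / (2 * c)) * c = (g + s * c - f h * c) / 2 := by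
      field_simp
    have h3 : (s - (g + s * c - f h * c) / (2 * c)) * c
        = s * c - ((g + s * c - f h * c) / (2 * c)) * c := by ring
    rw [h3, h2] at hlt2
    linarith
  -- build the affine support function
  haveI : CompleteSpace V := FiniteDimensional.complete ℝ V
  obtain ⟨L, hLdef⟩ : ∃ L : EuclideanSpace ℝ (Fin n) →ₗ[ℝ] ℝ,
      L = (-(1/c)) • (φ.toLinearMap.comp ((LinearMap.inl ℝ V ℝ).comp
        ((Submodule.orthogonalProjectionOnto V : EuclideanSpace ℝ (Fin n) →L[ℝ] V).toLinearMap))) := ⟨_, rfl⟩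
  have hLval : ∀ x, L x = -(1/c) * φ ((Submodule.orthogonalProjectionOnto V x : V), 0) := by
    intro x
    rw [hLdef]
    simp only [LinearMap.smul_apply, LinearMap.comp_apply, LinearMap.inl_apply,
      ContinuousLinearMap.coe_coe, smul_eq_mul]
  have hLV : ∀ v : V, L (v : EuclideanSpace ℝ (Fin n)) = -(1/c) * φ (v, 0) := by
    intro v
    rw [hLval, Submodule.orthogonalProjectionOnto_mem_subspace_eq_self]
  have hβprop : ∀ p' : EuclideanSpace ℝ (Fin n),
      f h + L (p' - h) = L (p' -ᵥ h) +ᵥ (f h + L (h - h)) := by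
    intro p'
    rw [vsub_eq_sub, vadd_eq_add, sub_self, map_zero, add_zero, add_comm]
  obtain ⟨β, hβdef⟩ : ∃ β : EuclideanSpace ℝ (Fin n) →ᵃ[ℝ] ℝ,
      β = AffineMap.mk' (fun x => f h + L (x - h)) L h hβprop := ⟨_, rfl⟩
  have hβval : ∀ x, β x = f h + L (x - h) := by
    intro x
    rw [hβdef, AffineMap.coe_mk']
  have hβtouch : β h = f h := by rw [hβval, sub_self, map_zero, add_zero]
  have hnear : ∀ v : V, ‖(v : EuclideanSpace ℝ (Fin n))‖ < ε →
      f (h + (v : EuclideanSpace ℝ (Fin n))) ≤ f h + L (v : EuclideanSpace ℝ (Fin n)) := by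
    intro v hv
    have hs := hsuppineq v hv
    rw [hLV]
    have hrhs : f h + -(1/c) * φ (v, 0) = (f h * c - φ (v, 0)) / c := by
      field_simp
      ring
    rw [hrhs, le_div_iff₀ hc]
    linarith
  refine ⟨β, ?_, hβtouch⟩
  intro x hx
  rw [hβval]
  by_cases hxh : x = h
  · subst hxh
    rw [sub_self, map_zero, add_zero]
  have hxV : x - h ∈ V := by
    have := AffineSubspace.vsub_mem_direction (subset_affineSpan ℝ D hx) (hcoe ▸ hh'A)
    simpa [vsub_eq_sub] using this
  have hwne : ‖x - h‖ ≠ 0 := by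
    intro hcon
    exact hxh (by rwa [norm_eq_zero, sub_eq_zero] at hcon)
  have hwpos : 0 < ‖x - h‖ := lt_of_le_of_ne (norm_nonneg _) (Ne.symm hwne)
  obtain ⟨lam0, hlam0def⟩ : ∃ lam0 : ℝ, lam0 = min 1 (ε / (2 * ‖x - h‖)) := ⟨_, rfl⟩
  have hlam0pos : 0 < lam0 := by
    rw [hlam0def]; exact lt_min one_pos (div_pos hε (by positivity))
  have hlam0le : lam0 ≤ 1 := by rw [hlam0def]; exact min_le_left _ _
  have hnorm : ‖((lam0 • (⟨x - h, hxV⟩ : V) : V) : EuclideanSpace ℝ (Fin n))‖ < ε := by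
    have hcast : ‖((lam0 • (⟨x - h, hxV⟩ : V) : V) : EuclideanSpace ℝ (Fin n))‖
        = lam0 * ‖x - h‖ := by
      rw [Submodule.coe_smul, norm_smul, Real.norm_eq_abs, abs_of_pos hlam0pos]
    rw [hcast]
    have h1 : lam0 ≤ ε / (2 * ‖x - h‖) := by rw [hlam0def]; exact min_le_right _ _
    calc lam0 * ‖x - h‖ ≤ (ε / (2 * ‖x - h‖)) * ‖x - h‖ :=
          mul_le_mul_of_nonneg_right h1 (norm_nonneg _)
      _ = ε / 2 := by field_simp
      _ < ε := by linarith
  have hz := hnear _ hnorm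
  have hcoesmul : ((lam0 • (⟨x - h, hxV⟩ : V) : V) : EuclideanSpace ℝ (Fin n))
      = lam0 • (x - h) := by rw [Submodule.coe_smul]
  rw [hcoesmul] at hz
  have hzeq : h + lam0 • (x - h) = (1 - lam0) • h + lam0 • x := by module
  rw [hzeq] at hz
  have hcc := hconc.2 hhD hx (by linarith : (0:ℝ) ≤ 1 - lam0) (le_of_lt hlam0pos) (by ring)
  have hfinal : (1 - lam0) * f h + lam0 * f x ≤ f ((1 - lam0) • h + lam0 • x) := by
    simpa [smul_eq_mul] using hcc
  have hLsmul : L (lam0 • (x - h)) = lam0 * L (x - h) := by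
    rw [map_smul, smul_eq_mul]
  rw [hLsmul] at hz
  nlinarith [hz, hfinal, hlam0pos]

/-- If every affine support function of a nonnegative continuous concave `f` on
a compact convex `D` is strictly positive on `D`, then any extreme point of
the hypograph body `K` lying on the graph of `f` and appearing with positive
coefficient in a convex decomposition of a graph point over `relint D` has
strictly positive `f`-value. -/
theorem stmt15 (n : ℕ) (D : Set (EuclideanSpace ℝ (Fin n)))
    (hD : IsCompact D) (hDc : Convex ℝ D)
    (f : EuclideanSpace ℝ (Fin n) → ℝ)
    (hcont : ContinuousOn f D) (hconc : ConcaveOn ℝ D f)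
    (hnn : ∀ x ∈ D, 0 ≤ f x)
    (hsupp : ∀ β : EuclideanSpace ℝ (Fin n) →ᵃ[ℝ] ℝ,
      (∀ x ∈ D, f x ≤ β x) → (∃ x ∈ D, β x = f x) → ∀ x ∈ D, 0 < β x)
    (K : Set (EuclideanSpace ℝ (Fin n) × ℝ))
    (hK : K = {p | p.1 ∈ D ∧ 0 ≤ p.2 ∧ p.2 ≤ f p.1}) :
    ∀ h ∈ intrinsicInterior ℝ D,
      ∀ (m : ℕ) (p : Fin m → EuclideanSpace ℝ (Fin n) × ℝ) (lam : Fin m → ℝ),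
        (∀ i, 0 < lam i) → (∑ i, lam i = 1) →
        (∀ i, p i ∈ Set.extremePoints ℝ K) →
        (∑ i, lam i • p i = (h, f h)) →
        ∀ i, (p i).2 = f ((p i).1) → 0 < f ((p i).1) := by
  intro h hrel m p lam hlam hlam1 hext hsum i hti
  have hhD : h ∈ D := intrinsicInterior_subset hrel
  obtain ⟨β, hβge, hβtouch⟩ := exists_affine_support hDc hcont hconc hrel
  have hpos := hsupp β hβge ⟨h, hhD, hβtouch⟩
  -- membership facts for the extreme points
  have hmem : ∀ j, (p j).1 ∈ D ∧ 0 ≤ (p j).2 ∧ (p j).2 ≤ f ((p j).1) := by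
    intro j
    have := (hext j).1
    rwa [hK] at this
  -- components of the sum
  have hfst : ∑ j, lam j • (p j).1 = h := by
    have := congrArg Prod.fst hsum
    simpa [Prod.fst_sum, Prod.smul_fst] using this
  have hsnd : ∑ j, lam j * (p j).2 = f h := by
    have := congrArg Prod.snd hsum
    simpa [Prod.snd_sum, Prod.smul_snd, smul_eq_mul] using this
  -- β of the barycenter equals the affine combination of the β-values
  have hβsum : ∑ j, lam j * β ((p j).1) = f h := by
    have haff : ∀ y : EuclideanSpace ℝ (Fin n), β y = β.linear y + (β 0 : ℝ) := by
      intro y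
      have := β.map_vadd 0 y
      simpa [vadd_eq_add] using this
    calc ∑ j, lam j * β ((p j).1)
        = ∑ j, (lam j * β.linear ((p j).1) + lam j * β 0) := by
          refine Finset.sum_congr rfl fun j _ => ?_
          rw [haff ((p j).1)]; ring
      _ = (∑ j, β.linear (lam j • (p j).1)) + (∑ j, lam j) * β 0 := by
          rw [Finset.sum_add_distrib, ← Finset.sum_mul]
          congr 1
          refine Finset.sum_congr rfl fun j _ => ?_
          rw [map_smul, smul_eq_mul]
      _ = β.linear (∑ j, lam j • (p j).1) + β 0 := by
          rw [← map_sum, hlam1, one_mul]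
      _ = β h := by rw [hfst, ← haff h]
      _ = f h := hβtouch
  -- termwise comparison forces equality
  have hterm : ∀ j ∈ Finset.univ, lam j * (p j).2 ≤ lam j * β ((p j).1) := by
    intro j _
    have h1 := (hmem j).2.2
    have h2 := hβge _ (hmem j).1
    exact mul_le_mul_of_nonneg_left (le_trans h1 h2) (le_of_lt (hlam j))
  have hsumeq : ∑ j, lam j * (p j).2 = ∑ j, lam j * β ((p j).1) := by
    rw [hsnd, hβsum]
  have heach := (Finset.sum_eq_sum_iff_of_le hterm).mp hsumeq i (Finset.mem_univ i)
  have hβi : (p i).2 = β ((p i).1) := mul_left_cancel₀ (ne_of_gt (hlam i)) heach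
  rw [hti] at hβi
  rw [hβi]
  exact hpos _ (hmem i).1
end
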